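/- Latent projection commutes: if G is an mDAG with vertex set V ∪ U1 ∪ U2 (disjoint), then p(G, V) = p(p(G, V ∪ U1), V); in particular, the order in which vertices are projected out does not matter. -/

import Mathlib

/-- An mDAG: an acyclic directed graph together with an abstract simplicial complex of
bidirected faces (all faces nonempty, all singletons present, closed under nonempty subsets). -/
structure MDAG (W : Type) where
  Edge : W → W → Prop
  Faces : Set (Set W)
  acyclic : ∀ w, ¬ Relation.TransGen Edge w w
  singleton_mem : ∀ w : W, {w} ∈ Faces
  nonempty_of_mem : ∀ B ∈ Faces, B.Nonempty
  down_closed : ∀ A B : Set W, A ⊆ B → A.Nonempty → B ∈ Faces → A ∈ Faces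

/-- `projEdge Edge U a b`: there is a directed path from `a` to `b` (of length ≥ 1) with all
non-endpoint vertices in `U`.  This is the directed-edge relation of the latent projection
that projects out `U`. -/
def projEdge {W : Type} (Edge : W → W → Prop) (U : Set W) (a b : W) : Prop :=
  ∃ c, Relation.ReflTransGen (fun x y => Edge x y ∧ y ∈ U) a c ∧ Edge c b

/-- `hcc Edge Faces U S`: the vertices of `S` share a hidden common cause with respect to `U`:
there is a bidirected face `B ⊆ U ∪ S` such that every `w ∈ S` is reached from some `b ∈ B`
by a directed path all of whose vertices lie in `U ∪ {w}`. -/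
def hcc {W : Type} (Edge : W → W → Prop) (Faces : Set (Set W)) (U : Set W) (S : Set W) : Prop :=
  ∃ B ∈ Faces, B ⊆ U ∪ S ∧
    ∀ w ∈ S, ∃ b ∈ B, Relation.ReflTransGen (fun x y => Edge x y ∧ x ∈ U) b w

section Aux

variable {W : Type} {E : W → W → Prop} {U1 U2 : Set W}

lemma prependU2 {a a' b : W} (h : E a a') (h2 : a' ∈ U2) (hp : projEdge E U2 a' b) :
    projEdge E U2 a b := by
  obtain ⟨c, hc, hcb⟩ := hp
  exact ⟨c, Relation.ReflTransGen.head ⟨h, h2⟩ hc, hcb⟩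

/-- A single projected edge landing in `U1 ∪ U2` gives a target-conditioned chain. -/
lemma seg12 {x y : W} (h : projEdge E U2 x y) (hy : y ∈ U1 ∪ U2) :
    Relation.ReflTransGen (fun p q => E p q ∧ q ∈ U1 ∪ U2) x y := by
  obtain ⟨c, hc, hcy⟩ := h
  exact (Relation.ReflTransGen.mono (fun p q hpq => ⟨hpq.1, Or.inr hpq.2⟩) _ _ hc).tail ⟨hcy, hy⟩

/-- A chain of projected edges through `U1` gives a target-conditioned chain in `U1 ∪ U2`. -/
lemma chain1 {a d : W}
    (h : Relation.ReflTransGen (fun x y => projEdge E U2 x y ∧ y ∈ U1) a d) :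
    Relation.ReflTransGen (fun x y => E x y ∧ y ∈ U1 ∪ U2) a d := by
  induction h with
  | refl => exact .refl
  | tail _ h2 ih => exact ih.trans (seg12 h2.1 (Or.inl h2.2))

/-- Key lemma for part 1 backward direction. -/
lemma back1 {b c : W} (hcb : E c b) :
    ∀ {a}, Relation.ReflTransGen (fun x y => E x y ∧ y ∈ U1 ∪ U2) a c →
      ∃ d, Relation.ReflTransGen (fun x y => projEdge E U2 x y ∧ y ∈ U1) a d ∧
        projEdge E U2 d b := by
  intro a h
  induction h using Relation.ReflTransGen.head_induction_on with
  | refl => exact ⟨c, .refl, c, .refl, hcb⟩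
  | head h1 _ ih =>
    obtain ⟨d, hd, hdb⟩ := ih
    rcases h1.2 with hm1 | hm2
    · exact ⟨d, .head ⟨⟨_, .refl, h1.1⟩, hm1⟩ hd, hdb⟩
    · rcases hd.cases_head with rfl | ⟨e, he, hrest⟩
      · exact ⟨_, .refl, prependU2 h1.1 hm2 hdb⟩
      · exact ⟨d, .head ⟨prependU2 h1.1 hm2 he.1, he.2⟩ hrest, hdb⟩

lemma tgtChain_src12 {c y : W} (hE : E c y) :
    ∀ {x}, Relation.ReflTransGen (fun p q => E p q ∧ q ∈ U2) x c →
      x ∈ U1 ∪ U2 → Relation.ReflTransGen (fun p q => E p q ∧ p ∈ U1 ∪ U2) x y := by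
  intro x h
  induction h using Relation.ReflTransGen.head_induction_on with
  | refl => exact fun hc => Relation.ReflTransGen.single ⟨hE, hc⟩
  | head h1 _ ih => exact fun hx => Relation.ReflTransGen.head ⟨h1.1, hx⟩ (ih (Or.inr h1.2))

/-- A chain of projected edges with sources in `U1` gives a source-conditioned chain. -/
lemma chainE' {v w : W}
    (h : Relation.ReflTransGen (fun x y => projEdge E U2 x y ∧ x ∈ U1) v w) :
    Relation.ReflTransGen (fun x y => E x y ∧ x ∈ U1 ∪ U2) v w := by
  induction h with
  | refl => exact .refl
  | tail _ h2 ih =>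
    obtain ⟨c, hc, hcy⟩ := h2.1
    exact ih.trans (tgtChain_src12 hcy hc (Or.inl h2.2))

lemma toProj {v : W} :
    ∀ {m}, Relation.ReflTransGen (fun x y => E x y ∧ x ∈ U2) m v →
      ∀ b, E b m → projEdge E U2 b v := by
  intro m h
  induction h using Relation.ReflTransGen.head_induction_on with
  | refl => exact fun b hb => ⟨b, .refl, hb⟩
  | head h1 _ ih =>
    intro b hb
    obtain ⟨c, hc, hcv⟩ := ih _ h1.1
    exact ⟨c, .head ⟨hb, h1.2⟩ hc, hcv⟩

/-- Key decomposition for part 2 backward direction. -/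
lemma decomp (hdisj : Disjoint U1 U2) {w : W} (hw : w ∉ U2) :
    ∀ {b}, Relation.ReflTransGen (fun x y => E x y ∧ x ∈ U1 ∪ U2) b w →
      ∃ v, v ∉ U2 ∧ (v ∈ U1 ∨ v = w) ∧
        Relation.ReflTransGen (fun x y => E x y ∧ x ∈ U2) b v ∧
        Relation.ReflTransGen (fun x y => projEdge E U2 x y ∧ x ∈ U1) v w := by
  intro b h
  induction h using Relation.ReflTransGen.head_induction_on with
  | refl => exact ⟨w, hw, Or.inr rfl, .refl, .refl⟩
  | head h1 _ ih =>
    obtain ⟨v, hv2, hv1, p1, p2⟩ := ih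
    rcases h1.2 with hb1 | hb2
    · exact ⟨_, Set.disjoint_left.mp hdisj hb1, Or.inl hb1, .refl,
        .head ⟨toProj p1 _ h1.1, hb1⟩ p2⟩
    · exact ⟨v, hv2, hv1, .head ⟨h1.1, hb2⟩ p1, p2⟩

end Aux

/-- Latent projection commutes: for an mDAG `G` with vertices `V ∪ U₁ ∪ U₂` (disjoint),
projecting out `U₂` first (giving the mDAG `p(G, V ∪ U₁)`, whose edges are `projEdge G.Edge U₂`
and whose faces are the sets sharing a hidden common cause w.r.t. `U₂`) and then `U₁` yields
the same mDAG on `V` as projecting out `U₁ ∪ U₂` at once. -/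
theorem stmt12 {W : Type} [Fintype W] (G : MDAG W) (U1 U2 : Set W) (hdisj : Disjoint U1 U2) :
    (∀ a b, a ∉ U1 ∪ U2 → b ∉ U1 ∪ U2 →
      (projEdge (projEdge G.Edge U2) U1 a b ↔ projEdge G.Edge (U1 ∪ U2) a b)) ∧
    (∀ S : Set W, S ⊆ (U1 ∪ U2)ᶜ → S.Nonempty →
      (hcc (projEdge G.Edge U2)
          {S' | S' ⊆ U2ᶜ ∧ S'.Nonempty ∧ hcc G.Edge G.Faces U2 S'} U1 S ↔
        hcc G.Edge G.Faces (U1 ∪ U2) S)) := by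
  set E := G.Edge with hE
  constructor
  · intro a b _ hb
    constructor
    · rintro ⟨d, hd, c, hc, hcb⟩
      exact ⟨c, (chain1 hd).trans (Relation.ReflTransGen.mono (fun p q hpq => ⟨hpq.1, Or.inr hpq.2⟩) _ _ hc), hcb⟩
    · rintro ⟨c, hc, hcb⟩
      exact back1 hcb hc
  · intro S hS hSne
    constructor
    · rintro ⟨B', ⟨_, _, B, hBF, hBsub2, hp2⟩, hB'sub, hpaths⟩
      refine ⟨B, hBF, ?_, ?_⟩
      · intro b hb
        rcases hBsub2 hb with h2 | hB'
        · exact Or.inl (Or.inr h2)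
        · rcases hB'sub hB' with h1 | hs
          · exact Or.inl (Or.inl h1)
          · exact Or.inr hs
      · intro w hw
        obtain ⟨b', hb', hpath⟩ := hpaths w hw
        obtain ⟨b, hb, hp⟩ := hp2 b' hb'
        exact ⟨b, hb, (Relation.ReflTransGen.mono (fun p q hpq => ⟨hpq.1, Or.inr hpq.2⟩) _ _ hp).trans (chainE' hpath)⟩
    · rintro ⟨B, hBF, hBsub, hp⟩
      refine ⟨{v | (v ∈ U1 ∨ v ∈ S) ∧ ∃ b ∈ B, Relation.ReflTransGen
          (fun x y => E x y ∧ x ∈ U2) b v}, ⟨?_, ?_, ?_⟩, ?_, ?_⟩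
      · rintro v ⟨hv1 | hvS, -⟩
        · exact Set.disjoint_left.mp hdisj hv1
        · exact fun h2 => hS hvS (Or.inr h2)
      · obtain ⟨w, hw⟩ := hSne
        obtain ⟨b, hb, hpath⟩ := hp w hw
        obtain ⟨v, _, hv1, p1, _⟩ := decomp hdisj (fun h2 => hS hw (Or.inr h2)) hpath
        exact ⟨v, by rcases hv1 with h | rfl
                     · exact Or.inl h
                     · exact Or.inr hw, b, hb, p1⟩
      · refine ⟨B, hBF, ?_, fun w' hw' => hw'.2⟩
        intro b hb
        rcases hBsub hb with (h1 | h2) | hs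
        · exact Or.inr ⟨Or.inl h1, b, hb, .refl⟩
        · exact Or.inl h2
        · exact Or.inr ⟨Or.inr hs, b, hb, .refl⟩
      · rintro v ⟨hv1 | hvS, -⟩
        · exact Or.inl hv1
        · exact Or.inr hvS
      · intro w hw
        obtain ⟨b, hb, hpath⟩ := hp w hw
        obtain ⟨v, _, hv1, p1, p2⟩ := decomp hdisj (fun h2 => hS hw (Or.inr h2)) hpath
        exact ⟨v, ⟨by rcases hv1 with h | rfl
                      · exact Or.inl h
                      · exact Or.inr hw, b, hb, p1⟩, p2⟩
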